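/- Let U₁, U₂ be positive semi-definite symmetric n×n matrices with U = U₁ + U₂ positive definite. Then the matrix U₂U⁻¹U₁ is positive semi-definite. -/

import Mathlib

open Matrix

theorem stmt4 (n : ℕ) (U₁ U₂ : Matrix (Fin n) (Fin n) ℝ)
    (h₁ : U₁.PosSemidef) (h₂ : U₂.PosSemidef) (hU : (U₁ + U₂).PosDef) :
    (U₂ * (U₁ + U₂)⁻¹ * U₁).PosSemidef := by
  set U := U₁ + U₂ with hUdef
  have hUpsd := hU.posSemidef
  set S := (open scoped MatrixOrder in CFC.sqrt U) with hSdef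
  have hSpsd : S.PosSemidef := by open scoped MatrixOrder in exact (CFC.sqrt_nonneg U).posSemidef
  have hSS : S * S = U := by open scoped MatrixOrder in exact CFC.sqrt_mul_sqrt_self U hUpsd.nonneg
  -- S is invertible
  have hdetU : IsUnit U.det := isUnit_iff_ne_zero.mpr (ne_of_gt hU.det_pos)
  have hdetS : IsUnit S.det := by
    have h : IsUnit (S.det * S.det) := by rw [← det_mul, hSS]; exact hdetU
    exact isUnit_of_mul_isUnit_left h
  set T := S⁻¹ with hTdef
  have hST : S * T = 1 := mul_nonsing_inv S hdetS
  have hTS : T * S = 1 := nonsing_inv_mul S hdetS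
  have hTherm : T.IsHermitian := by
    rw [hTdef, Matrix.IsHermitian, conjTranspose_nonsing_inv, hSpsd.1]
  have hUinv : U⁻¹ = T * T := by
    rw [← hSS, Matrix.mul_inv_rev]
  set A := T * U₁ * T with hAdef
  have hApsd : A.PosSemidef := by
    have := h₁.mul_mul_conjTranspose_same T
    rwa [hTherm.eq] at this
  have hBpsd : (1 - A).PosSemidef := by
    have key : T * U₂ * T = 1 - A := by
      have hTUT : T * U * T = 1 := by
        calc T * U * T = (T * S) * (S * T) := by rw [← hSS]; noncomm_ring
          _ = 1 := by rw [hTS, hST, Matrix.one_mul]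
      calc T * U₂ * T = T * U * T - T * U₁ * T := by
            rw [hUdef]; noncomm_ring
        _ = 1 - A := by rw [hTUT, hAdef]
    rw [← key]
    have := h₂.mul_mul_conjTranspose_same T
    rwa [hTherm.eq] at this
  -- A * (1 - A) is PSD: conjugate (1-A) by sqrt A
  set R := (open scoped MatrixOrder in CFC.sqrt A) with hRdef
  have hRpsd : R.PosSemidef := by open scoped MatrixOrder in exact (CFC.sqrt_nonneg A).posSemidef
  have hRR : R * R = A := by open scoped MatrixOrder in exact CFC.sqrt_mul_sqrt_self A hApsd.nonneg
  have hRcomm : R * A = A * R := by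
    rw [← hRR]; noncomm_ring
  have hR1A : R * (1 - A) = (1 - A) * R := by
    rw [Matrix.mul_sub, Matrix.sub_mul, Matrix.mul_one, Matrix.one_mul, hRcomm]
  have hA1A : (A * (1 - A)).PosSemidef := by
    have : R * (1 - A) * Rᴴ = A * (1 - A) := by
      rw [hRpsd.1, hR1A, Matrix.mul_assoc, hRR]
      noncomm_ring
    rw [← this]
    exact hBpsd.mul_mul_conjTranspose_same R
  -- Now conjugate by S
  have key : U₂ * U⁻¹ * U₁ = S * ((1 - A) * A) * Sᴴ := by
    have hcommA : (1 - A) * A = A * (1 - A) := by noncomm_ring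
    rw [hSpsd.1, hUinv, hAdef]
    have hU₂ : U₂ = U - U₁ := by rw [hUdef]; abel
    rw [hU₂, ← hSS]
    have e1 : S * ((1 - T * U₁ * T) * (T * U₁ * T)) * S
        = (S - S * (T * U₁ * T)) * (T * U₁ * T) * S := by noncomm_ring
    rw [e1]
    have e2 : S * (T * U₁ * T) = U₁ * T := by
      rw [← Matrix.mul_assoc, ← Matrix.mul_assoc, hST, Matrix.one_mul]
    rw [e2]
    have e3 : T * U₁ * T * S = T * U₁ := by
      rw [Matrix.mul_assoc, Matrix.mul_assoc, hTS, Matrix.mul_one]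
    calc (S * S - U₁) * (T * T) * U₁ = (S * S - U₁) * T * (T * U₁) := by noncomm_ring
      _ = (S - U₁ * T) * (T * U₁) := by rw [Matrix.sub_mul, Matrix.mul_assoc S S T, hST, Matrix.mul_one]
      _ = (S - U₁ * T) * (T * U₁ * T * S) := by rw [e3]
      _ = (S - U₁ * T) * (T * U₁ * T) * S := by noncomm_ring
  rw [key]
  have : ((1 - A) * A).PosSemidef := by
    have : (1 - A) * A = A * (1 - A) := by noncomm_ring
    rw [this]; exact hA1A
  exact this.mul_mul_conjTranspose_same S
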